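/- Under the ordinary substitutes condition for the opponent, the constant-bid payoff is antitone in the price: for all k ∈ M and all grid prices p, p̂ ∈ G with p̂ ≥ p, V(k, p̂) ≤ V(k, p), where V(k,p) is the payoff obtained by bidding the constant bundle k until termination, i.e. V(k,p) = w(k) − ⟨k, p⟩ if k_j + D_j(p) ≤ m_j for all j, and V(k,p) = V(k, T(k,p,ε)) otherwise. -/

import Mathlib

open Finset Set

/-- Bundles of items: component `j` ranges over `{0, …, m j}`. -/
abbrev Bundle {M : ℕ} (m : Fin M → ℕ) := ∀ j, Fin (m j + 1)

/-- Quasi-linear payoff `v(δ) − ⟨δ, p⟩`. -/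
def payoff {M : ℕ} {m : Fin M → ℕ} (v : Bundle m → ℝ) (δ : Bundle m) (p : Fin M → ℝ) : ℝ :=
  v δ - ∑ j, (δ j : ℝ) * p j

/-- The indifference locus: prices where the demand set is not a singleton. -/
def indiff {M : ℕ} {m : Fin M → ℕ} (v : Bundle m → ℝ) : Set (Fin M → ℝ) :=
  {p | ∃ δ δ' : Bundle m, δ ≠ δ' ∧ (∀ d, payoff v d p ≤ payoff v δ p) ∧
    (∀ d, payoff v d p ≤ payoff v δ' p)}

/-- The SCA price update. -/
def Tup {M : ℕ} {m : Fin M → ℕ} (D : (Fin M → ℝ) → Bundle m) (ε : Fin M → ℝ)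
    (k : Bundle m) (p : Fin M → ℝ) : Fin M → ℝ :=
  fun j => p j + (if m j < (k j : ℕ) + (D p j : ℕ) then ε j else 0)

/-- under the substitutes condition, the constant-bid value `V` is
antitone in the price on the grid `G`. -/
theorem stmt4 {M : ℕ} (m : Fin M → ℕ) (hm : ∀ j, 0 < m j)
    (v : Bundle m → ℝ)
    (hv0 : v (fun _ => 0) = 0) (hvnn : ∀ δ, 0 ≤ v δ)
    (hvmono : ∀ δ δ' : Bundle m, (∀ j, (δ j : ℕ) ≤ (δ' j : ℕ)) → v δ ≤ v δ')
    (pmin : Fin M → ℝ) (hpmin : ∀ j, 0 ≤ pmin j)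
    (ε : Fin M → ℝ) (hε : ∀ j, 0 < ε j)
    (G : Set (Fin M → ℝ))
    (hG : G = {p | ∀ j, ∃ n : ℕ, p j = pmin j + n * ε j})
    (hGT : ∀ p ∈ G, p ∉ indiff v)
    (D : (Fin M → ℝ) → Bundle m)
    (hD : ∀ p ∈ G, ∀ d, d ≠ D p → payoff v d p < payoff v (D p) p)
    (hsub : ∀ (j : Fin M) (p phat : Fin M → ℝ),
      (∀ i, 0 ≤ p i) → (∀ i, 0 ≤ phat i) →
      p ∉ indiff v → phat ∉ indiff v →
      (∀ i, i ≠ j → p i ≤ phat i) → phat j = p j →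
      (D p j : ℕ) ≤ (D phat j : ℕ))
    (w : Bundle m → ℝ)
    (V : Bundle m → (Fin M → ℝ) → ℝ)
    (hVterm : ∀ k p, (∀ j, (k j : ℕ) + (D p j : ℕ) ≤ m j) →
      V k p = w k - ∑ j, (k j : ℝ) * p j)
    (hVstep : ∀ k p, ¬ (∀ j, (k j : ℕ) + (D p j : ℕ) ≤ m j) →
      V k p = V k (Tup D ε k p)) :
    ∀ (k : Bundle m), ∀ p ∈ G, ∀ phat ∈ G, (∀ j, p j ≤ phat j) →
      V k phat ≤ V k p := by
  intro k
  classical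
  have hGnn : ∀ p ∈ G, ∀ j, 0 ≤ p j := by
    intro p hp j
    rw [hG] at hp
    obtain ⟨n, hn⟩ := hp j
    rw [hn]
    have := hpmin j
    have := (hε j).le
    positivity
  obtain ⟨B, hB⟩ : ∃ B : ℝ, ∀ δ : Bundle m, v δ ≤ B :=
    ⟨Finset.univ.sup' ⟨_, Finset.mem_univ (fun _ => (0 : Fin _))⟩ v,
      fun δ => Finset.le_sup' v (Finset.mem_univ δ)⟩
  set N : Fin M → ℕ := fun j => ⌈B / ε j⌉₊ with hN
  have hBN : ∀ j, B ≤ (N j : ℝ) * ε j := by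
    intro j
    have h1 : B / ε j ≤ (N j : ℝ) := Nat.le_ceil (B / ε j)
    have h2 : B / ε j * ε j ≤ (N j : ℝ) * ε j :=
      mul_le_mul_of_nonneg_right h1 (hε j).le
    rwa [div_mul_cancel₀ _ (hε j).ne'] at h2
  set f : (Fin M → ℝ) → Fin M → ℕ := fun p j => ⌊(p j - pmin j) / ε j⌋₊ with hf
  have hfval : ∀ (p : Fin M → ℝ) (j : Fin M) (n : ℕ), p j = pmin j + n * ε j → f p j = n := by
    intro p j n h
    simp only [hf]
    rw [h]
    have h2 : (pmin j + (n : ℝ) * ε j - pmin j) / ε j = (n : ℝ) := by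
      rw [add_sub_cancel_left, mul_div_assoc, div_self (hε j).ne', mul_one]
    rw [h2, Nat.floor_natCast]
  have hfgrid : ∀ p ∈ G, ∀ j, p j = pmin j + (f p j : ℝ) * ε j := by
    intro p hp j
    rw [hG] at hp
    obtain ⟨n, hn⟩ := hp j
    rw [hfval p j n hn, hn]
  set μ : (Fin M → ℝ) → ℕ := fun p => ∑ j, (N j - f p j) with hμ
  have hraise : ∀ p ∈ G, ∀ j, m j < (k j : ℕ) + (D p j : ℕ) → p j < B := by
    intro p hp j hj
    have hk : (k j : ℕ) ≤ m j := Fin.is_le _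
    have hD1 : 1 ≤ (D p j : ℕ) := by omega
    have hne : (fun _ => (0 : Fin _)) ≠ D p := by
      intro h
      have h2 : ((0 : Fin (m j + 1)) : ℕ) = (D p j : ℕ) := by rw [congrFun h j]
      simp at h2
      omega
    have hlt := hD p hp _ hne
    have h0 : payoff v (fun _ => (0 : Fin _)) p = 0 := by
      simp [payoff, hv0]
    rw [h0] at hlt
    have hsum : ∑ i, (D p i : ℝ) * p i < B := by
      have := hB (D p)
      simp only [payoff] at hlt
      linarith
    have hterm : p j ≤ ∑ i, (D p i : ℝ) * p i := by
      have h1 : p j ≤ (D p j : ℝ) * p j := by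
        nth_rewrite 1 [← one_mul (p j)]
        apply mul_le_mul_of_nonneg_right _ (hGnn p hp j)
        exact_mod_cast hD1
      refine h1.trans (Finset.single_le_sum (f := fun i => ((D p i : ℕ) : ℝ) * p i) (fun i _ => ?_) (Finset.mem_univ j))
      exact mul_nonneg (by positivity) (hGnn p hp i)
    linarith
  have hTG : ∀ p ∈ G, Tup D ε k p ∈ G := by
    intro p hp
    rw [hG] at hp ⊢
    intro j
    obtain ⟨n, hn⟩ := hp j
    by_cases h : m j < (k j : ℕ) + (D p j : ℕ)
    · refine ⟨n + 1, ?_⟩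
      simp only [Tup, if_pos h, hn]
      push_cast
      ring
    · refine ⟨n, ?_⟩
      simp only [Tup, if_neg h, hn, add_zero]
  have hTle : ∀ p j, p j ≤ Tup D ε k p j := by
    intro p j
    simp only [Tup]
    split
    · linarith [hε j]
    · simp
  have hfT : ∀ p ∈ G, ∀ j, f (Tup D ε k p) j =
      if m j < (k j : ℕ) + (D p j : ℕ) then f p j + 1 else f p j := by
    intro p hp j
    by_cases h : m j < (k j : ℕ) + (D p j : ℕ)
    · rw [if_pos h]
      apply hfval
      show p j + (if m j < (k j : ℕ) + (D p j : ℕ) then ε j else 0) = _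
      rw [if_pos h]
      rw [hfgrid p hp j]
      push_cast
      ring
    · rw [if_neg h]
      apply hfval
      show p j + (if m j < (k j : ℕ) + (D p j : ℕ) then ε j else 0) = _
      rw [if_neg h, add_zero]
      exact hfgrid p hp j
  have hfN : ∀ p ∈ G, ∀ j, m j < (k j : ℕ) + (D p j : ℕ) → f p j < N j := by
    intro p hp j h
    have h1 := hraise p hp j h
    have h2 := hfgrid p hp j
    have h3 : (f p j : ℝ) * ε j < (N j : ℝ) * ε j := by
      have := hBN j
      have := hpmin j
      nlinarith
    have h4 := lt_of_mul_lt_mul_right h3 (hε j).le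
    exact_mod_cast h4
  have hμdec : ∀ p ∈ G, ¬ (∀ j, (k j : ℕ) + (D p j : ℕ) ≤ m j) →
      μ (Tup D ε k p) < μ p := by
    intro p hp h
    push_neg at h
    obtain ⟨j0, hj0⟩ := h
    apply Finset.sum_lt_sum
    · intro i _
      rw [hfT p hp i]
      split
      · exact Nat.sub_le_sub_left (Nat.le_succ _) _
      · exact le_rfl
    · refine ⟨j0, Finset.mem_univ _, ?_⟩
      rw [hfT p hp j0, if_pos hj0]
      have := hfN p hp j0 hj0
      omega
  have halign : ∀ p ∈ G, ∀ q ∈ G, ∀ j, p j < q j → p j + ε j ≤ q j := by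
    intro p hp q hq j h
    have h1 := hfgrid p hp j
    have h2 := hfgrid q hq j
    have hab : f p j < f q j := by
      by_contra hc
      push_neg at hc
      have h3 : (f q j : ℝ) * ε j ≤ (f p j : ℝ) * ε j := by
        apply mul_le_mul_of_nonneg_right _ (hε j).le
        exact_mod_cast hc
      linarith
    have h4 : (f p j : ℝ) + 1 ≤ (f q j : ℝ) := by exact_mod_cast hab
    have := hε j
    nlinarith
  have hcompare : ∀ p ∈ G, ∀ q ∈ G, (∀ i, p i ≤ q i) → ∀ j, p j = q j →
      m j < (k j : ℕ) + (D p j : ℕ) → m j < (k j : ℕ) + (D q j : ℕ) := by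
    intro p hp q hq hle j hj h
    have := hsub j p q (hGnn p hp) (hGnn q hq) (hGT p hp) (hGT q hq)
      (fun i _ => hle i) hj.symm
    omega
  have base : ∀ q ∈ G, (∀ j, (k j : ℕ) + (D q j : ℕ) ≤ m j) →
      ∀ s : ℕ, ∀ p ∈ G, μ p ≤ s → (∀ j, p j ≤ q j) → V k q ≤ V k p := by
    intro q hq hqterm s
    induction s with
    | zero =>
      intro p hp hμp hle
      by_cases hterm : ∀ j, (k j : ℕ) + (D p j : ℕ) ≤ m j
      · rw [hVterm k p hterm, hVterm k q hqterm]
        have hs : ∑ j, (k j : ℝ) * p j ≤ ∑ j, (k j : ℝ) * q j :=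
          Finset.sum_le_sum fun j _ =>
            mul_le_mul_of_nonneg_left (hle j) (by positivity)
        linarith
      · exact absurd (hμdec p hp hterm) (by omega)
    | succ s ih =>
      intro p hp hμp hle
      by_cases hterm : ∀ j, (k j : ℕ) + (D p j : ℕ) ≤ m j
      · rw [hVterm k p hterm, hVterm k q hqterm]
        have hs : ∑ j, (k j : ℝ) * p j ≤ ∑ j, (k j : ℝ) * q j :=
          Finset.sum_le_sum fun j _ =>
            mul_le_mul_of_nonneg_left (hle j) (by positivity)
        linarith
      · rw [hVstep k p hterm]
        apply ih (Tup D ε k p) (hTG p hp) (by have := hμdec p hp hterm; omega)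
        intro j
        by_cases hr : m j < (k j : ℕ) + (D p j : ℕ)
        · rcases lt_or_eq_of_le (hle j) with hlt | heq
          · have h5 := halign p hp q hq j hlt
            simp only [Tup, if_pos hr]
            linarith
          · exact absurd (hcompare p hp q hq hle j heq hr) (by have := hqterm j; omega)
        · simpa [Tup, hr] using hle j
  have main : ∀ t : ℕ, ∀ q ∈ G, μ q ≤ t → ∀ p ∈ G, (∀ j, p j ≤ q j) →
      V k q ≤ V k p := by
    intro t
    induction t with
    | zero =>
      intro q hq hμq p hp hle
      by_cases hterm : ∀ j, (k j : ℕ) + (D q j : ℕ) ≤ m j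
      · exact base q hq hterm (μ p) p hp le_rfl hle
      · exact absurd (hμdec q hq hterm) (by omega)
    | succ t ih =>
      intro q hq hμq p hp hle
      by_cases hterm : ∀ j, (k j : ℕ) + (D q j : ℕ) ≤ m j
      · exact base q hq hterm (μ p) p hp le_rfl hle
      · rw [hVstep k q hterm]
        exact ih (Tup D ε k q) (hTG q hq) (by have := hμdec q hq hterm; omega) p hp
          (fun j => (hle j).trans (hTle q j))
  intro p hp phat hphat hle
  exact main (μ phat) phat hphat le_rfl p hp hle
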